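/- Let p be an odd prime and k a positive integer, and let S_p^k = {x ∈ S_p(0) : x < p^k} (equivalently, the set of nonnegative integers less than p^k with no base-p digit equal to p-1). Then S_p^k is a modular p-free set mod p^k: it contains 0, it is p-free mod p^k, and it p-covers mod p^k every x with 0 ≤ x < p^k and x ∉ S_p^k. -/

import Mathlib

open scoped Classical

/-- A set of naturals is `p`-free if it contains no `p`-term arithmetic
progression with positive common difference. -/
def IsPFree (p : ℕ) (A : Set ℕ) : Prop :=
  ¬ ∃ a d : ℕ, 0 < d ∧ ∀ i < p, a + i * d ∈ A

/-- `A` `p`-covers `x`: there are `x₁ < x₂ < ⋯ < x_{p-1}` in `A` such that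
`x₁, …, x_{p-1}, x` is an arithmetic progression. -/
def PCovers (p : ℕ) (A : Set ℕ) (x : ℕ) : Prop :=
  ∃ a d : ℕ, 0 < d ∧ (∀ i < p - 1, a + i * d ∈ A) ∧ a + (p - 1) * d = x

/-- The set of naturals `≤ n` accepted by the greedy algorithm generating the
`p`-Stanley sequence of `A`: an integer is accepted if it belongs to `A`, or if
it exceeds every element of `A` and adjoining it to the previously accepted
integers keeps the set `p`-free. -/
noncomputable def stanleyUpTo (p : ℕ) (A : Set ℕ) : ℕ → Set ℕ
  | 0 => if 0 ∈ A ∨ ((∀ a ∈ A, a < 0) ∧ IsPFree p {0}) then {0} else ∅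
  | n + 1 =>
      if n + 1 ∈ A ∨ ((∀ a ∈ A, a < n + 1) ∧
          IsPFree p (insert (n + 1) (stanleyUpTo p A n))) then
        insert (n + 1) (stanleyUpTo p A n)
      else stanleyUpTo p A n

/-- The `p`-Stanley sequence generated by `A`, as a set of naturals. -/
def StanleySeq (p : ℕ) (A : Set ℕ) : Set ℕ := {x | x ∈ stanleyUpTo p A x}

/-- `A ⊆ {0, 1, …, N-1}` `p`-covers `x` mod `N`: there are
`x₁ < x₂ < ⋯ < x_{p-1}` in `A` such that `x₁, …, x_{p-1}, x` or
`x₁, …, x_{p-1}, x + N` is an arithmetic progression. -/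
def PCoversMod (p N : ℕ) (A : Set ℕ) (x : ℕ) : Prop :=
  ∃ a d : ℕ, 0 < d ∧ (∀ i < p - 1, a + i * d ∈ A) ∧
    (a + (p - 1) * d = x ∨ a + (p - 1) * d = x + N)

/-- `A` is `p`-free mod `N`: `A` contains no `p`-term arithmetic progression
modulo `N` with nonzero common difference. -/
def IsPFreeMod (p N : ℕ) (A : Set ℕ) : Prop :=
  ¬ ∃ a d : ZMod N, d ≠ 0 ∧ ∀ i : ℕ, i < p → ∃ x ∈ A, (x : ZMod N) = a + (i : ZMod N) * d

/-- `A ⊆ {0, 1, …, N-1}` is a modular `p`-free set mod `N`: it contains `0`,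
is `p`-free mod `N`, and `p`-covers mod `N` every `x` with `0 ≤ x < N`, `x ∉ A`. -/
def IsModularPFree (p N : ℕ) (A : Set ℕ) : Prop :=
  A ⊆ Set.Iio N ∧ 0 ∈ A ∧ IsPFreeMod p N A ∧
    ∀ x < N, x ∉ A → PCoversMod p N A x


namespace SpkAux

/-- Numbers none of whose base-`p` digits equals `p - 1`. -/
def Dset (p : ℕ) : Set ℕ := {x | ∀ i, x / p ^ i % p ≠ p - 1}

lemma zero_mem_Dset {p : ℕ} (hp : 2 ≤ p) : 0 ∈ Dset p := by
  intro i
  simp only [Nat.zero_div, Nat.zero_mod]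
  omega

lemma sum_shift (p m : ℕ) (b : ℕ → ℕ) :
    ∑ i ∈ Finset.range (m + 1), b i * p ^ i
      = p * ∑ i ∈ Finset.range m, b (i + 1) * p ^ i + b 0 := by
  rw [Finset.sum_range_succ', pow_zero, mul_one, Finset.mul_sum]
  congr 1
  refine Finset.sum_congr rfl fun i _ => ?_
  ring

lemma digit_sum {p : ℕ} (hp : 2 ≤ p) :
    ∀ (j m : ℕ) (b : ℕ → ℕ), (∀ i, i < m → b i < p) →
    (∑ i ∈ Finset.range m, b i * p ^ i) / p ^ j % p = if j < m then b j else 0 := by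
  intro j
  induction j with
  | zero =>
    intro m b hb
    cases m with
    | zero => simp
    | succ m =>
      rw [sum_shift, pow_zero, Nat.div_one, if_pos (Nat.succ_pos m), Nat.mul_add_mod,
        Nat.mod_eq_of_lt (hb 0 (Nat.succ_pos m))]
  | succ j ih =>
    intro m b hb
    cases m with
    | zero => simp
    | succ m =>
      rw [sum_shift]
      have hp0 : 0 < p := by omega
      have h1 : (p * ∑ i ∈ Finset.range m, b (i + 1) * p ^ i + b 0) / p ^ (j + 1)
          = (∑ i ∈ Finset.range m, b (i + 1) * p ^ i) / p ^ j := by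
        rw [pow_succ', ← Nat.div_div_eq_div_mul, Nat.mul_add_div hp0,
          Nat.div_eq_of_lt (hb 0 (Nat.succ_pos m)), Nat.add_zero]
      rw [h1, ih m (fun i => b (i + 1)) (fun i hi => hb (i + 1) (by omega))]
      simp [Nat.succ_lt_succ_iff]

lemma sum_digits_mod {p : ℕ} (x : ℕ) :
    ∀ m, ∑ i ∈ Finset.range m, (x / p ^ i % p) * p ^ i = x % p ^ m := by
  intro m
  induction m with
  | zero => simp [Nat.mod_one]
  | succ m ih =>
    rw [Finset.sum_range_succ, ih, pow_succ]
    have h1 := Nat.div_add_mod (x % (p ^ m * p)) (p ^ m)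
    have h2 : x % (p ^ m * p) % p ^ m = x % p ^ m :=
      Nat.mod_mod_of_dvd x ⟨p, rfl⟩
    have h3 : x % (p ^ m * p) / p ^ m = x / p ^ m % p :=
      Nat.mod_mul_right_div_self x (p ^ m) p
    rw [← h1, h2, h3]; ring

/-- Every `x ∉ Dset p` is covered by an AP whose first `p-1` terms are in
`Dset p` and below `x`. -/
lemma cover {p : ℕ} (hp : 2 ≤ p) {x : ℕ} (hx : x ∉ Dset p) :
    ∃ a d : ℕ, 0 < d ∧ (∀ j, j < p - 1 → a + j * d ∈ Dset p ∧ a + j * d < x) ∧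
      a + (p - 1) * d = x := by
  obtain ⟨i0, hi0⟩ : ∃ i, x / p ^ i % p = p - 1 := by
    by_contra h
    push_neg at h
    exact hx h
  set m := x with hm
  have hxm : x < p ^ m := Nat.lt_pow_self (by omega : 1 < p)
  have hi0m : i0 < m := by
    have h1 : x / p ^ i0 ≠ 0 := by
      intro h; rw [h] at hi0; simp at hi0; omega
    have h2 : p ^ i0 ≤ x := by
      rcases Nat.lt_or_ge x (p ^ i0) with h | h
      · exact absurd (Nat.div_eq_of_lt h) h1
      · exact h
    exact (Nat.pow_lt_pow_iff_right (by omega : 1 < p)).mp (lt_of_le_of_lt h2 hxm)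
  set c : ℕ → ℕ := fun i => x / p ^ i % p with hc
  set d := ∑ i ∈ Finset.range m, (if c i = p - 1 then 1 else 0) * p ^ i with hd
  set a := ∑ i ∈ Finset.range m, (if c i = p - 1 then 0 else c i) * p ^ i with ha
  have key : ∀ j, a + j * d
      = ∑ i ∈ Finset.range m, (if c i = p - 1 then j else c i) * p ^ i := by
    intro j
    rw [ha, hd, Finset.mul_sum, ← Finset.sum_add_distrib]
    refine Finset.sum_congr rfl fun i _ => ?_
    split_ifs <;> ring
  have hcp : ∀ i, c i < p := fun i => Nat.mod_lt _ (by omega)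
  have hdig : ∀ j, j < p → ∀ t, (a + j * d) / p ^ t % p
      = if t < m then (if c t = p - 1 then j else c t) else 0 := by
    intro j hj t
    rw [key j]
    exact digit_sum hp t m _ (fun i _ => by split_ifs <;> [exact hj; exact hcp i])
  have hdpos : 0 < d := by
    have h1 : (if c i0 = p - 1 then 1 else 0) * p ^ i0 ≤ d :=
      Finset.single_le_sum (f := fun i => (if c i = p - 1 then 1 else 0) * p ^ i)
        (fun i _ => Nat.zero_le _) (Finset.mem_range.mpr hi0m)
    rw [if_pos hi0, one_mul] at h1
    exact lt_of_lt_of_le (pow_pos (by omega) i0) h1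
  have hlast : a + (p - 1) * d = x := by
    rw [key]
    have he : ∀ i ∈ Finset.range m, (if c i = p - 1 then p - 1 else c i) * p ^ i
        = c i * p ^ i := by
      intro i _
      split_ifs with h
      · rw [h]
      · rfl
    rw [Finset.sum_congr rfl he, hc]
    simp only
    rw [sum_digits_mod x m, Nat.mod_eq_of_lt hxm]
  refine ⟨a, d, hdpos, fun j hj => ⟨?_, ?_⟩, hlast⟩
  · intro t
    rw [hdig j (by omega) t]
    split_ifs with h1 h2
    · omega
    · exact h2
    · omega
  · have hmul : j * d ≤ (p - 2) * d := Nat.mul_le_mul_right d (by omega)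
    have h2 : (p - 1) * d = (p - 2) * d + d := by
      have h3 : p - 1 = (p - 2) + 1 := by omega
      rw [h3, Nat.add_mul, one_mul]
    omega

/-- In any residue class family `A + j•e` with `p ∤ e`, some `j < p` hits
residue `p - 1` mod `p`. -/
lemma exists_hit {p : ℕ} (hp : p.Prime) {e : ℕ} (he : ¬ p ∣ e) (A : ℕ) :
    ∃ j, j < p ∧ (A + j * e) % p = p - 1 := by
  haveI : Fact p.Prime := ⟨hp⟩
  haveI : NeZero p := ⟨hp.ne_zero⟩
  have hez : (e : ZMod p) ≠ 0 := by
    rw [Ne, ZMod.natCast_eq_zero_iff]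
    exact he
  set J : ZMod p := (((p - 1 : ℕ) : ZMod p) - (A : ZMod p)) * (e : ZMod p)⁻¹ with hJ
  refine ⟨J.val, J.val_lt, ?_⟩
  have hcast : ((A + J.val * e : ℕ) : ZMod p) = ((p - 1 : ℕ) : ZMod p) := by
    push_cast
    rw [ZMod.natCast_rightInverse J, hJ, mul_assoc, inv_mul_cancel₀ hez, mul_one]
    ring
  have h2 := (ZMod.natCast_eq_natCast_iff' (A + J.val * e) (p - 1) p).mp hcast
  have hp2 := hp.two_le
  rw [Nat.mod_eq_of_lt (by omega : p - 1 < p)] at h2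
  exact h2

/-- `Dset p` contains no `p`-term AP with positive common difference. -/
lemma not_ap_in_D {p : ℕ} (hp : p.Prime) {a d : ℕ} (hd : 0 < d)
    (h : ∀ j, j < p → a + j * d ∈ Dset p) : False := by
  haveI : Fact p.Prime := ⟨hp⟩
  have hdvd : p ^ padicValNat p d ∣ d := pow_padicValNat_dvd
  set v := padicValNat p d with hv
  obtain ⟨e, he⟩ := hdvd
  have hpe : ¬ p ∣ e := by
    rintro ⟨f, hf⟩
    refine pow_succ_padicValNat_not_dvd (p := p) hd.ne' ⟨f, ?_⟩
    rw [← hv, pow_succ]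
    conv_lhs => rw [he, hf]
    ring
  obtain ⟨j, hj, hjmod⟩ := exists_hit hp hpe (a / p ^ v)
  have hne : ∀ t, (a + j * d) / p ^ t % p ≠ p - 1 := h j hj
  have hq : (a + j * d) / p ^ v = a / p ^ v + j * e := by
    have h1 : a + j * d = a + p ^ v * (j * e) := by
      conv_lhs => rw [he]
      ring
    rw [h1, Nat.add_mul_div_left _ _ (pow_pos hp.pos _)]
  exact hne v (hq ▸ hjmod)


lemma modfree_aux {p k : ℕ} (hp : p.Prime) (hk : 0 < k) :
    ¬ ∃ a d : ZMod (p ^ k), d ≠ 0 ∧ ∀ i : ℕ, i < p →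
      ∃ x ∈ {x | x ∈ Dset p ∧ x < p ^ k}, (x : ZMod (p ^ k)) = a + (i : ZMod (p ^ k)) * d := by
  haveI : Fact p.Prime := ⟨hp⟩
  haveI : NeZero (p ^ k) := ⟨(pow_pos hp.pos k).ne'⟩
  rintro ⟨a, d, hd, h⟩
  have hdval : 0 < d.val := by
    rcases Nat.eq_zero_or_pos d.val with h0 | h0
    · exact absurd ((ZMod.val_eq_zero d).mp h0) hd
    · exact h0
  have hdlt : d.val < p ^ k := ZMod.val_lt d
  have hdvd : p ^ padicValNat p d.val ∣ d.val := pow_padicValNat_dvd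
  set v := padicValNat p d.val with hv
  obtain ⟨e, he⟩ := hdvd
  have hpe : ¬ p ∣ e := by
    rintro ⟨f, hf⟩
    refine pow_succ_padicValNat_not_dvd (p := p) hdval.ne' ⟨f, ?_⟩
    rw [← hv, pow_succ]
    conv_lhs => rw [he, hf]
    ring
  have hvk : v + 1 ≤ k := by
    have h1 : p ^ v ≤ d.val := Nat.le_of_dvd hdval ⟨e, he⟩
    exact (Nat.pow_lt_pow_iff_right hp.one_lt).mp (lt_of_le_of_lt h1 hdlt)
  obtain ⟨j, hj, hjmod⟩ := exists_hit hp hpe (a.val / p ^ v)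
  obtain ⟨x, ⟨hxD, hxlt⟩, hxe⟩ := h j hj
  have hcong : x ≡ a.val + j * d.val [MOD p ^ k] := by
    have hc : ((x : ℕ) : ZMod (p ^ k)) = ((a.val + j * d.val : ℕ) : ZMod (p ^ k)) := by
      push_cast
      rw [ZMod.natCast_rightInverse a, ZMod.natCast_rightInverse d]
      exact hxe
    exact (ZMod.natCast_eq_natCast_iff _ _ _).mp hc
  have hcong2 : x ≡ a.val + j * d.val [MOD p ^ (v + 1)] :=
    Nat.ModEq.of_dvd (pow_dvd_pow p hvk) hcong
  have hdig : x / p ^ v % p = (a.val + j * d.val) / p ^ v % p := by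
    have h1 : x % p ^ (v + 1) = (a.val + j * d.val) % p ^ (v + 1) := hcong2
    have h2 : ∀ y : ℕ, y / p ^ v % p = y % p ^ (v + 1) / p ^ v := by
      intro y
      rw [pow_succ, Nat.mod_mul_right_div_self]
    rw [h2 x, h2 (a.val + j * d.val), h1]
  have hq : (a.val + j * d.val) / p ^ v = a.val / p ^ v + j * e := by
    have h1 : a.val + j * d.val = a.val + p ^ v * (j * e) := by
      conv_lhs => rw [he]
      ring
    rw [h1, Nat.add_mul_div_left _ _ (pow_pos hp.pos _)]
  exact hxD v (by rw [hdig, hq]; exact hjmod)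


lemma stanleyUpTo_eq {p : ℕ} (hp : p.Prime) :
    ∀ n, stanleyUpTo p {0} n = {x | x ∈ Dset p ∧ x ≤ n} := by
  have hp2 := hp.two_le
  intro n
  induction n with
  | zero =>
    rw [stanleyUpTo]
    have hcond : (0 : ℕ) ∈ ({0} : Set ℕ) ∨ ((∀ a ∈ ({0} : Set ℕ), a < 0) ∧ IsPFree p {0}) :=
      Or.inl rfl
    rw [if_pos hcond]
    ext x
    simp only [Set.mem_singleton_iff, Set.mem_setOf_eq, Nat.le_zero]
    constructor
    · rintro rfl; exact ⟨zero_mem_Dset hp2, rfl⟩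
    · rintro ⟨_, rfl⟩; rfl
  | succ n ih =>
    rw [stanleyUpTo, ih]
    by_cases hD : (n + 1) ∈ Dset p
    · have hcond : (n + 1) ∈ ({0} : Set ℕ) ∨ ((∀ a ∈ ({0} : Set ℕ), a < n + 1) ∧
          IsPFree p (insert (n + 1) {x | x ∈ Dset p ∧ x ≤ n})) := by
        refine Or.inr ⟨fun a ha => ?_, ?_⟩
        · simp only [Set.mem_singleton_iff] at ha
          omega
        · rintro ⟨a, d, hd, hap⟩
          refine not_ap_in_D hp (a := a) hd (fun j hj => ?_)
          rcases Set.mem_insert_iff.mp (hap j hj) with h | ⟨h1, _⟩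
          · rw [h]; exact hD
          · exact h1
      rw [if_pos hcond]
      ext x
      simp only [Set.mem_insert_iff, Set.mem_setOf_eq]
      constructor
      · rintro (rfl | ⟨h1, h2⟩)
        · exact ⟨hD, le_refl _⟩
        · exact ⟨h1, by omega⟩
      · rintro ⟨h1, h2⟩
        rcases Nat.lt_or_ge x (n + 1) with h | h
        · exact Or.inr ⟨h1, by omega⟩
        · exact Or.inl (by omega)
    · have hcond : ¬ ((n + 1) ∈ ({0} : Set ℕ) ∨ ((∀ a ∈ ({0} : Set ℕ), a < n + 1) ∧
          IsPFree p (insert (n + 1) {x | x ∈ Dset p ∧ x ≤ n}))) := by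
        rintro (h | ⟨_, hfree⟩)
        · simp only [Set.mem_singleton_iff] at h
          omega
        · obtain ⟨a, d, hd, hmem, hlast⟩ := cover hp2 hD
          refine hfree ⟨a, d, hd, fun j hj => ?_⟩
          rcases Nat.lt_or_ge j (p - 1) with h | h
          · obtain ⟨hD', hlt⟩ := hmem j h
            exact Set.mem_insert_iff.mpr (Or.inr ⟨hD', by omega⟩)
          · have hj' : j = p - 1 := by omega
            rw [hj', hlast]
            exact Set.mem_insert_iff.mpr (Or.inl rfl)
      rw [if_neg hcond]
      ext x
      simp only [Set.mem_setOf_eq]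
      constructor
      · rintro ⟨h1, h2⟩; exact ⟨h1, by omega⟩
      · rintro ⟨h1, h2⟩
        refine ⟨h1, ?_⟩
        rcases Nat.eq_or_lt_of_le h2 with h | h
        · exact absurd (h ▸ h1) hD
        · omega

lemma stanleySeq_eq {p : ℕ} (hp : p.Prime) : StanleySeq p {0} = Dset p := by
  ext x
  simp only [StanleySeq, Set.mem_setOf_eq, stanleyUpTo_eq hp x]
  exact ⟨fun h => h.1, fun h => ⟨h, le_refl x⟩⟩

end SpkAux

/-- For `p` an odd prime and `k ≥ 1`, the set
`S_p^k = {x ∈ S_p(0) : x < p^k}` is a modular `p`-free set mod `p^k`. -/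
theorem Spk_isModularPFree (p k : ℕ) (hp : p.Prime) (hodd : Odd p)
    (hk : 0 < k) :
    IsModularPFree p (p ^ k) {x | x ∈ StanleySeq p {0} ∧ x < p ^ k} := by
  have hp2 := hp.two_le
  have hset : {x | x ∈ StanleySeq p {0} ∧ x < p ^ k}
      = {x | x ∈ SpkAux.Dset p ∧ x < p ^ k} := by
    ext x
    rw [Set.mem_setOf_eq, Set.mem_setOf_eq, SpkAux.stanleySeq_eq hp]
  rw [hset]
  refine ⟨?_, ?_, SpkAux.modfree_aux hp hk, ?_⟩
  · rintro x ⟨_, hx⟩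
    exact hx
  · exact ⟨SpkAux.zero_mem_Dset hp2, pow_pos hp.pos k⟩
  · intro x hxlt hxnot
    have hxD : x ∉ SpkAux.Dset p := fun h => hxnot ⟨h, hxlt⟩
    obtain ⟨a, d, hd, hmem, hlast⟩ := SpkAux.cover hp2 hxD
    exact ⟨a, d, hd, fun j hj => ⟨(hmem j hj).1, lt_trans (hmem j hj).2 hxlt⟩,
      Or.inl hlast⟩
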